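/- Suppose Z is uniformly convex, there exist a, b with 0 < a ≤ b < 1 and a ≤ α_n ≤ b, a ≤ β_n ≤ b for all n, and F(K) is nonempty. Then lim_{n→∞} ‖r_n − K s_n‖ = 0. -/

import Mathlib

open Filter

/-- uniform convexity for general convex combinations with coefficients in `[c, 1-c]`. -/
lemma aux_uc_comb {E : Type*} [NormedAddCommGroup E] [NormedSpace ℝ E] [UniformConvexSpace E]
    {ε c : ℝ} (hε : 0 < ε) (hc : 0 < c) :
    ∃ δ > 0, ∀ x y : E, ‖x‖ ≤ 1 → ‖y‖ ≤ 1 → ε ≤ ‖x - y‖ → ∀ t : ℝ, c ≤ t → c ≤ 1 - t →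
      ‖t • x + (1 - t) • y‖ ≤ 1 - δ := by
  obtain ⟨δ, hδ, h⟩ := exists_forall_closed_ball_dist_add_le_two_sub E hε
  refine ⟨c * δ, mul_pos hc hδ, fun x y hx hy hxy t hct hc1t => ?_⟩
  have hsum := h hx hy hxy
  rcases le_total t (1/2) with ht | ht
  · have heq : t • x + (1 - t) • y = t • (x + y) + (1 - 2*t) • y := by module
    have h1 : ‖t • (x + y) + (1 - 2*t) • y‖ ≤ t * ‖x + y‖ + (1 - 2*t) * ‖y‖ := by
      refine (norm_add_le _ _).trans ?_
      rw [norm_smul, norm_smul, Real.norm_of_nonneg (by linarith), Real.norm_of_nonneg (by linarith)]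
    rw [heq]
    nlinarith [norm_nonneg y, norm_nonneg (x + y)]
  · have heq : t • x + (1 - t) • y = (1 - t) • (x + y) + (2*t - 1) • x := by module
    have h1 : ‖(1 - t) • (x + y) + (2*t - 1) • x‖ ≤ (1 - t) * ‖x + y‖ + (2*t - 1) * ‖x‖ := by
      refine (norm_add_le _ _).trans ?_
      rw [norm_smul, norm_smul, Real.norm_of_nonneg (by linarith), Real.norm_of_nonneg (by linarith)]
    rw [heq]
    nlinarith [norm_nonneg x, norm_nonneg (x + y)]

/-- in a uniformly convex Banach space, with `a ≤ α n ≤ b`, `a ≤ β n ≤ b`,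
`0 < a ≤ b < 1`, and `F(K)` nonempty, one has `‖r n − K (s n)‖ → 0`. -/
theorem stmt_4
    {Z : Type*} [NormedAddCommGroup Z] [NormedSpace ℝ Z] [CompleteSpace Z]
    [UniformConvexSpace Z]
    (W : Set Z) (hWne : W.Nonempty) (hWclosed : IsClosed W) (hWconvex : Convex ℝ W)
    (K : Z → Z) (hKmaps : Set.MapsTo K W W)
    (hKnonexp : ∀ x ∈ W, ∀ y ∈ W, ‖K x - K y‖ ≤ ‖x - y‖)
    (α β : ℕ → ℝ)
    (a b : ℝ) (ha : 0 < a) (hab : a ≤ b) (hb : b < 1)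
    (hα : ∀ n, a ≤ α n ∧ α n ≤ b) (hβ : ∀ n, a ≤ β n ∧ β n ≤ b)
    (s r : ℕ → Z) (hs0 : s 0 ∈ W)
    (hr : ∀ n, r n = (1 - β n) • s n + β n • K (s n))
    (hs : ∀ n, s (n + 1) = (1 - α n) • r n + α n • K (s n))
    (hF : ∃ w ∈ W, K w = w) :
    Filter.Tendsto (fun n => ‖r n - K (s n)‖) Filter.atTop (nhds 0) := by
  obtain ⟨w, hwW, hw⟩ := hF
  -- membership of the iterates in W
  have hsW : ∀ n, s n ∈ W := by
    intro n
    induction n with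
    | zero => exact hs0
    | succ n ih =>
      have hrW : r n ∈ W := by
        rw [hr n]
        exact hWconvex ih (hKmaps ih)
          (by linarith [(hβ n).2]) (by linarith [(hβ n).1]) (by ring)
      rw [hs n]
      exact hWconvex hrW (hKmaps ih)
        (by linarith [(hα n).2]) (by linarith [(hα n).1]) (by ring)
  set t : ℕ → ℝ := fun n => (1 - α n) * (1 - β n) with ht
  set c : ℝ := min a ((1 - b) * (1 - b)) with hcdef
  have hc : 0 < c := lt_min ha (by nlinarith)
  have hct : ∀ n, c ≤ t n := by
    intro n
    refine (min_le_right _ _).trans ?_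
    show (1 - b) * (1 - b) ≤ (1 - α n) * (1 - β n)
    have h1 := (hα n).2; have h2 := (hβ n).2
    exact mul_le_mul (by linarith) (by linarith) (by linarith) (by linarith)
  have hc1t : ∀ n, c ≤ 1 - t n := by
    intro n
    refine (min_le_left _ _).trans ?_
    show a ≤ 1 - (1 - α n) * (1 - β n)
    have h1 := (hα n).1; have h2 := (hα n).2
    have h3 := (hβ n).1; have h4 := (hβ n).2
    nlinarith [mul_nonneg (by linarith : (0:ℝ) ≤ β n) (by linarith : (0:ℝ) ≤ 1 - α n)]
  have ht1 : ∀ n, t n ≤ 1 := fun n => by linarith [hc1t n, hc.le]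
  have ht0 : ∀ n, 0 ≤ t n := fun n => hc.le.trans (hct n)
  -- key recurrence
  have hrec : ∀ n, s (n + 1) - w = t n • (s n - w) + (1 - t n) • (K (s n) - w) := by
    intro n
    rw [hs n, hr n, ht]
    module
  set d : ℕ → ℝ := fun n => ‖s n - w‖ with hd
  have hKb : ∀ n, ‖K (s n) - w‖ ≤ d n := by
    intro n
    calc ‖K (s n) - w‖ = ‖K (s n) - K w‖ := by rw [hw]
    _ ≤ ‖s n - w‖ := hKnonexp _ (hsW n) _ hwW
  have hmono : ∀ n, d (n + 1) ≤ d n := by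
    intro n
    calc d (n + 1) = ‖t n • (s n - w) + (1 - t n) • (K (s n) - w)‖ := by rw [hd]; simp [hrec n]
    _ ≤ ‖t n • (s n - w)‖ + ‖(1 - t n) • (K (s n) - w)‖ := norm_add_le _ _
    _ = t n * ‖s n - w‖ + (1 - t n) * ‖K (s n) - w‖ := by
        rw [norm_smul, norm_smul, Real.norm_of_nonneg (ht0 n),
          Real.norm_of_nonneg (by linarith [ht1 n])]
    _ ≤ t n * d n + (1 - t n) * d n := by
        have := hKb n
        have h1 := ht0 n; have h2 := ht1 n
        nlinarith [norm_nonneg (s n - w)]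
    _ = d n := by ring
  have hanti : Antitone d := antitone_nat_of_succ_le hmono
  have hd0 : ∀ n, 0 ≤ d n := fun n => norm_nonneg _
  set D : ℝ := d 0 with hD
  have hdD : ∀ n, d n ≤ D := fun n => hanti (Nat.zero_le n)
  -- main claim: ‖s n - K (s n)‖ → 0
  have h0 : Tendsto (fun n => ‖s n - K (s n)‖) atTop (nhds 0) := by
    rw [Metric.tendsto_atTop]
    intro ε hε
    by_contra hcon
    push_neg at hcon
    have hbadex : ∀ N, ∃ m ≥ N, ε ≤ ‖s m - K (s m)‖ := by
      intro N
      obtain ⟨m, hm, hm2⟩ := hcon N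
      refine ⟨m, hm, ?_⟩
      rwa [Real.dist_eq, sub_zero, abs_of_nonneg (norm_nonneg _)] at hm2
    have hε' : 0 < ε / (D + 1) := div_pos hε (by linarith [hd0 0])
    obtain ⟨δ, hδ, hconv⟩ := aux_uc_comb (E := Z) hε' hc
    set ρ : ℝ := max 0 (1 - δ) with hρ
    have hρ0 : 0 ≤ ρ := le_max_left _ _
    have hρ1 : ρ < 1 := max_lt one_pos (by linarith)
    -- each bad index shrinks d by factor ρ
    have hbad : ∀ n, ε ≤ ‖s n - K (s n)‖ → d (n + 1) ≤ ρ * d n := by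
      intro n hn
      have hεd : ε ≤ 2 * d n := by
        calc ε ≤ ‖s n - K (s n)‖ := hn
        _ ≤ ‖s n - w‖ + ‖K (s n) - w‖ := by
            have : s n - K (s n) = (s n - w) - (K (s n) - w) := by abel
            rw [this]; exact norm_sub_le _ _
        _ ≤ 2 * d n := by linarith [hKb n]
      have hdn : 0 < d n := by linarith
      set x : Z := (d n)⁻¹ • (s n - w) with hx
      set y : Z := (d n)⁻¹ • (K (s n) - w) with hy
      have hxn : ‖x‖ ≤ 1 := by
        rw [hx, norm_smul, Real.norm_of_nonneg (inv_nonneg.2 hdn.le)]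
        exact (inv_mul_le_one₀ hdn).mpr le_rfl
      have hyn : ‖y‖ ≤ 1 := by
        rw [hy, norm_smul, Real.norm_of_nonneg (inv_nonneg.2 hdn.le)]
        exact (inv_mul_le_one₀ hdn).mpr (hKb n)
      have hxy : ε / (D + 1) ≤ ‖x - y‖ := by
        have : x - y = (d n)⁻¹ • (s n - K (s n)) := by rw [hx, hy, ← smul_sub]; congr 1; abel
        rw [this, norm_smul, Real.norm_of_nonneg (inv_nonneg.2 hdn.le)]
        calc ε / (D + 1) ≤ ε / d n := by
              apply div_le_div_of_nonneg_left hε.le hdn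
              linarith [hdD n]
        _ ≤ (d n)⁻¹ * ‖s n - K (s n)‖ := by
              rw [div_eq_inv_mul]
              exact mul_le_mul_of_nonneg_left hn (inv_nonneg.2 hdn.le)
      have hcomb := hconv x y hxn hyn hxy (t n) (hct n) (hc1t n)
      have heq : t n • x + (1 - t n) • y = (d n)⁻¹ • (s (n + 1) - w) := by
        rw [hx, hy, hrec n]; module
      rw [heq, norm_smul, Real.norm_of_nonneg (inv_nonneg.2 hdn.le)] at hcomb
      have : d (n + 1) ≤ (1 - δ) * d n := by
        rw [inv_mul_le_iff₀ hdn] at hcomb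
        calc d (n + 1) = ‖s (n + 1) - w‖ := rfl
        _ ≤ (1 - δ) * d n := by linarith [hcomb]
      calc d (n + 1) ≤ (1 - δ) * d n := this
      _ ≤ ρ * d n := mul_le_mul_of_nonneg_right (le_max_right _ _) hdn.le
    -- d n ≥ ε/2 always (bad indices are unbounded, d antitone)
    have hlb : ∀ N, ε / 2 ≤ d N := by
      intro N
      obtain ⟨m, hm, hm2⟩ := hbadex N
      have : ε ≤ 2 * d m := by
        calc ε ≤ ‖s m - K (s m)‖ := hm2
        _ ≤ ‖s m - w‖ + ‖K (s m) - w‖ := by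
            have : s m - K (s m) = (s m - w) - (K (s m) - w) := by abel
            rw [this]; exact norm_sub_le _ _
        _ ≤ 2 * d m := by linarith [hKb m]
      linarith [hanti hm]
    -- iterate: for each k there is N with d N ≤ ρ^k * D
    have hiter : ∀ k : ℕ, ∃ N, d N ≤ ρ ^ k * D := by
      intro k
      induction k with
      | zero => exact ⟨0, by simpa using hdD 0⟩
      | succ k ih =>
        obtain ⟨N, hN⟩ := ih
        obtain ⟨m, hm, hm2⟩ := hbadex N
        refine ⟨m + 1, ?_⟩
        calc d (m + 1) ≤ ρ * d m := hbad m hm2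
        _ ≤ ρ * (ρ ^ k * D) := by
            refine mul_le_mul_of_nonneg_left ((hanti hm).trans hN) hρ0
        _ = ρ ^ (k + 1) * D := by ring
    have hεlb : ∀ k : ℕ, ε / 2 ≤ ρ ^ k * D := by
      intro k
      obtain ⟨N, hN⟩ := hiter k
      linarith [hlb N]
    have htend : Tendsto (fun k : ℕ => ρ ^ k * D) atTop (nhds 0) := by
      have := tendsto_pow_atTop_nhds_zero_of_lt_one hρ0 hρ1
      simpa using this.mul_const D
    have : ε / 2 ≤ (0 : ℝ) := le_of_tendsto_of_tendsto' tendsto_const_nhds htend hεlb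
    linarith
  -- conclude via squeeze
  have heq2 : ∀ n, ‖r n - K (s n)‖ ≤ ‖s n - K (s n)‖ := by
    intro n
    have h1 : r n - K (s n) = (1 - β n) • (s n - K (s n)) := by rw [hr n]; module
    rw [h1, norm_smul, Real.norm_of_nonneg (by linarith [(hβ n).2] : (0:ℝ) ≤ 1 - β n)]
    nlinarith [mul_nonneg (by linarith [(hβ n).1] : (0:ℝ) ≤ β n) (norm_nonneg (s n - K (s n)))]
  exact squeeze_zero (fun n => norm_nonneg _) heq2 h0
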